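/- Let n ≥ 3 be an integer, let u > 0 and let v_1,…,v_n be real numbers, and set α = u + v_1 + ⋯ + v_n and β = u² + v_1² + ⋯ + v_n². For squared edge lengths (w_1,…,w_{n−1}) together with a common value w, let ICM(w; w_1,…,w_{n−1}) denote the determinant of the n×n matrix with (1,1) entry 0, with (1,j) and (j,1) entries w_{j−1} for 2 ≤ j ≤ n, and with (i,j) entry equal to 0 if i = j and w otherwise for 2 ≤ i, j ≤ n. Then ICM(u; u,…,u) = (−1)^(n+1) · (n−1) · u^n, and for each j with 1 ≤ j ≤ n, ICM(u; v_1,…,v_{j−1},v_{j+1},…,v_n) = (−u)^(n−2) · [ (n−2)β − α² + 2αu − (n−1)u² − (n−1)v_j² + 2α v_j − 2u v_j ]. -/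

import Mathlib

open Matrix Finset

/-- `ICM n w ws` is the inner Cayley–Menger determinant of an `(n-1)`-simplex
whose squared edge lengths from the first vertex are `ws 1, …, ws (n-1)` and
whose remaining squared edge lengths all equal `w`.  The `n × n` matrix is
indexed by `Fin n`: index `0` is the first vertex (paper index `1`) and
indices `1, …, n-1` are the vertices with paper indices `2, …, n`. -/
noncomputable def ICM (n : ℕ) (w : ℝ) (ws : ℕ → ℝ) : ℝ :=
  Matrix.det (Matrix.of fun i j : Fin n =>
    if i.val = 0 then (if j.val = 0 then 0 else ws j.val)
    else if j.val = 0 then ws i.val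
    else if i = j then 0 else w)

lemma key' (p : ℕ) (w : ℝ) (hw : w ≠ 0) (a : Fin (p + 2) → ℝ) :
    (Matrix.fromBlocks (0 : Matrix (Fin 1) (Fin 1) ℝ)
      (Matrix.of fun _ j => a j) (Matrix.of fun i _ => a i)
      (Matrix.of fun i j : Fin (p + 2) => if i = j then 0 else w)).det
    = (-1) ^ (p + 2) * w ^ (p + 1) *
        ((∑ i, a i) ^ 2 - (((p : ℝ) + 2) - 1) * ∑ i, (a i) ^ 2) := by
  have hmdef : p + 2 = p + 2 := rfl
  have hm1 : (((p : ℝ) + 2) - 1) ≠ 0 := by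
    have hp : (0:ℝ) ≤ (p:ℝ) := Nat.cast_nonneg p
    nlinarith
  set Jm : Matrix (Fin (p + 2)) (Fin (p + 2)) ℝ := Matrix.of fun _ _ => (1 : ℝ) with hJ
  set B : Matrix (Fin 1) (Fin (p + 2)) ℝ := Matrix.of fun _ j => a j with hB
  set C : Matrix (Fin (p + 2)) (Fin 1) ℝ := Matrix.of fun i _ => a i with hC
  set D : Matrix (Fin (p + 2)) (Fin (p + 2)) ℝ := Matrix.of fun i j => if i = j then 0 else w with hDdef
  set e : ℝ := 1 / (w * (((p : ℝ) + 2) - 1)) with he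
  set f : ℝ := -1 / w with hf
  set E : Matrix (Fin (p + 2)) (Fin (p + 2)) ℝ := e • Jm + f • 1 with hE
  set s : ℝ := ∑ i, a i with hs
  set q : ℝ := ∑ i, (a i) ^ 2 with hq
  have hEapp : ∀ k l : Fin (p + 2), E k l = e + if k = l then f else 0 := by
    intro k l
    by_cases h : k = l <;> simp [hE, hJ, Matrix.one_apply, h]
  have hDE : D * E = 1 := by
    ext i j
    have step : ∀ k : Fin (p + 2),
        (Matrix.of fun i j : Fin (p + 2) => if i = j then (0:ℝ) else w) i k * E k j =
          (w * e + (if k = j then w * f else 0))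
            - (if i = k then w * e + (if k = j then w * f else 0) else 0) := by
      intro k
      rw [hEapp k j]
      simp only [Matrix.of_apply]
      by_cases h1 : i = k
      · subst h1
        by_cases h2 : i = j <;> simp [h2]
      · by_cases h2 : k = j
        · subst h2
          simp [h1, Ne.symm h1, mul_add]
        · simp [h1, h2]
    simp only [Matrix.mul_apply, hDdef]
    rw [Finset.sum_congr rfl fun k _ => step k]
    rw [Finset.sum_sub_distrib, Finset.sum_add_distrib]
    simp only [Finset.sum_const, Finset.card_univ, Fintype.card_fin, nsmul_eq_mul,
      Finset.sum_ite_eq, Finset.sum_ite_eq', Finset.mem_univ, if_true]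
    by_cases hij : i = j <;>
      simp [hij, Matrix.one_apply, he, hf] <;> field_simp <;> ring
  have hED : E * D = 1 := mul_eq_one_comm.mp hDE
  letI : Invertible D := ⟨E, hED, hDE⟩
  have hinv : ⅟D = E := rfl
  have hdetD : D.det = (-w) ^ (p + 2) * (1 - ((p : ℝ) + 2)) := by
    have hDcol : D = (-w) • (1 + Matrix.replicateCol (Fin 1) (fun _ => (-1 : ℝ)) *
        Matrix.replicateRow (Fin 1) (fun _ => (1 : ℝ))) := by
      ext i j
      by_cases h : i = j <;>
        simp [hDdef, Matrix.one_apply, h, Matrix.mul_apply, Matrix.add_apply]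
    rw [hDcol, Matrix.det_smul]
    erw [Matrix.det_one_add_replicateCol_mul_replicateRow (ι := Fin 1) (fun _ : Fin (p + 2) => (-1 : ℝ)) (fun _ => (1 : ℝ))]
    simp [dotProduct, Fintype.card_fin, sub_eq_add_neg]
  have hEC : ∀ k : Fin (p + 2), (E * C) k (0 : Fin 1) = e * s + f * a k := by
    intro k
    have step : ∀ l : Fin (p + 2), E k l * C l (0 : Fin 1) =
        e * a l + (if k = l then f * a l else 0) := by
      intro l
      rw [hEapp k l]
      by_cases h : k = l <;> simp [hC, h] <;> ring
    simp only [Matrix.mul_apply]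
    rw [Finset.sum_congr rfl fun l _ => step l, Finset.sum_add_distrib]
    simp [← Finset.mul_sum, hs]
  have hBEC : (B * E * C) (0 : Fin 1) (0 : Fin 1) = e * s ^ 2 + f * q := by
    have step : ∀ k : Fin (p + 2), B (0 : Fin 1) k * (E * C) k (0 : Fin 1) =
        e * a k * s + f * (a k) ^ 2 := by
      intro k; rw [hEC k]; simp [hB]; ring
    rw [Matrix.mul_assoc, Matrix.mul_apply]
    rw [Finset.sum_congr rfl fun k _ => step k, Finset.sum_add_distrib]
    rw [← Finset.sum_mul, ← Finset.mul_sum, ← Finset.mul_sum]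
    rw [← hq, ← hs]
    ring
  rw [Matrix.det_fromBlocks₂₂, hinv, hdetD, Matrix.det_fin_one, Matrix.sub_apply, hBEC]
  simp only [Matrix.zero_apply, zero_sub, he, hf]
  rw [neg_pow]
  push_cast
  field_simp
  ring

lemma ICM_eq (p : ℕ) (w : ℝ) (hw : w ≠ 0) (ws : ℕ → ℝ) :
    ICM (p + 3) w ws = (-1) ^ (p + 2) * w ^ (p + 1) *
      ((∑ i ∈ Finset.range (p + 2), ws (1 + i)) ^ 2 -
        (((p : ℝ) + 2) - 1) * ∑ i ∈ Finset.range (p + 2), ws (1 + i) ^ 2) := by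
  set e : Fin 1 ⊕ Fin (p + 2) ≃ Fin (p + 3) :=
    finSumFinEquiv.trans (finCongr (by omega)) with he
  have hval : ∀ k : Fin (p + 2), (e (Sum.inr k)).val = 1 + k.val := by
    intro k; simp [he, finCongr_apply]; omega
  have hval0 : ∀ i : Fin 1, (e (Sum.inl i)).val = 0 := by
    intro i; simp [he, finCongr_apply]
  unfold ICM
  rw [← Matrix.det_submatrix_equiv_self e]
  have hsub : (Matrix.of fun i j : Fin (p + 3) =>
      if i.val = 0 then (if j.val = 0 then 0 else ws j.val)
      else if j.val = 0 then ws i.val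
      else if i = j then 0 else w).submatrix e e =
      Matrix.fromBlocks (0 : Matrix (Fin 1) (Fin 1) ℝ)
        (Matrix.of fun (_ : Fin 1) (j : Fin (p + 2)) => ws (1 + j.val))
        (Matrix.of fun i _ => ws (1 + i.val))
        (Matrix.of fun i j : Fin (p + 2) => if i = j then 0 else w) := by
    ext x y
    cases x with
    | inl i => cases y with
      | inl i' => simp only [Matrix.submatrix_apply, Matrix.of_apply, hval0]; simp [hval0]
      | inr k => simp only [Matrix.submatrix_apply, Matrix.of_apply, hval0, hval]; simp [hval0, hval]
    | inr k => cases y with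
      | inl i' => simp only [Matrix.submatrix_apply, Matrix.of_apply, hval0, hval]; simp [hval0, hval]
      | inr k' =>
        have h1 : (e (Sum.inr k)).val ≠ 0 := by rw [hval]; omega
        have h2 : (e (Sum.inr k')).val ≠ 0 := by rw [hval]; omega
        simp only [Matrix.submatrix_apply, Matrix.of_apply, hval]; simp [e.apply_eq_iff_eq]
  rw [hsub, key' p w hw (fun k : Fin (p + 2) => ws (1 + k.val))]
  rw [Fin.sum_univ_eq_sum_range (fun i => ws (1 + i)) (p + 2),
    Fin.sum_univ_eq_sum_range (fun i => ws (1 + i) ^ 2) (p + 2)]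

lemma sum_shift (n j : ℕ) (hj1 : 1 ≤ j) (hjn : j ≤ n) (f : ℕ → ℝ) :
    ∑ i ∈ Finset.range (n - 1), (if 1 + i < j then f (1 + i) else f (1 + i + 1))
      = (∑ i ∈ Finset.Icc 1 n, f i) - f j := by
  have h1 : ∑ k ∈ Finset.Ico 1 n, (if k < j then f k else f (k + 1)) =
      ∑ i ∈ Finset.range (n - 1), (if 1 + i < j then f (1 + i) else f (1 + i + 1)) := by
    rw [Finset.sum_Ico_eq_sum_range]
  rw [← h1]
  rw [← Finset.sum_Ico_consecutive (fun k => if k < j then f k else f (k + 1)) hj1 hjn]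
  have h2 : ∑ k ∈ Finset.Ico 1 j, (if k < j then f k else f (k + 1)) =
      ∑ k ∈ Finset.Ico 1 j, f k := by
    refine Finset.sum_congr rfl fun k hk => ?_
    rw [if_pos (Finset.mem_Ico.mp hk).2]
  have h3 : ∑ k ∈ Finset.Ico j n, (if k < j then f k else f (k + 1)) =
      ∑ k ∈ Finset.Ico (j + 1) (n + 1), f k := by
    rw [Finset.sum_Ico_eq_sum_range, Finset.sum_Ico_eq_sum_range]
    have : n + 1 - (j + 1) = n - j := by omega
    rw [this]
    refine Finset.sum_congr rfl fun i hi => ?_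
    rw [if_neg (by omega), show j + i + 1 = j + 1 + i by omega]
  rw [h2, h3]
  have h4 : ∑ i ∈ Finset.Icc 1 n, f i = ∑ i ∈ Finset.Ico 1 (n + 1), f i := by
    rw [Finset.Ico_add_one_right_eq_Icc]
  rw [h4, ← Finset.sum_Ico_consecutive f hj1 (by omega : j ≤ n + 1),
    Finset.sum_eq_sum_Ico_succ_bot (by omega : j < n + 1) f]
  ring

/-- Formulas for the inner Cayley–Menger determinants of the facets of the
`n`-pre-kite `PK[n; u; v₁,…,vₙ]`:  the `0`-th facet is the regular
`(n-1)`-simplex with all squared edge lengths `u`, and the `j`-th facet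
(for `1 ≤ j ≤ n`) has edge-length data `(u; v₁,…,v_{j-1},v_{j+1},…,vₙ)`. -/
theorem stmt_4 (n : ℕ) (hn : 3 ≤ n) (u : ℝ) (hu : 0 < u) (v : ℕ → ℝ)
    (α β : ℝ)
    (hα : α = u + ∑ j ∈ Finset.Icc 1 n, v j)
    (hβ : β = u ^ 2 + ∑ j ∈ Finset.Icc 1 n, v j ^ 2) :
    ICM n u (fun _ => u) = (-1) ^ (n + 1) * ((n : ℝ) - 1) * u ^ n ∧
    ∀ j, 1 ≤ j → j ≤ n →
      ICM n u (fun k => if k < j then v k else v (k + 1)) =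
        (-u) ^ (n - 2) *
          (((n : ℝ) - 2) * β - α ^ 2 + 2 * α * u - ((n : ℝ) - 1) * u ^ 2
            - ((n : ℝ) - 1) * v j ^ 2 + 2 * α * v j - 2 * u * v j) := by
  obtain ⟨p, rfl⟩ : ∃ p, n = p + 3 := ⟨n - 3, by omega⟩
  have hw : u ≠ 0 := ne_of_gt hu
  have hneg : ∀ k : ℕ, ((-1 : ℝ)) ^ (k + 2) = (-1) ^ k := by
    intro k; rw [pow_add]; norm_num
  constructor
  · rw [ICM_eq p u hw]
    simp only [Finset.sum_const, Finset.card_range, nsmul_eq_mul]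
    rw [show p + 3 + 1 = (p + 2) + 2 by omega, hneg (p + 2), hneg p]
    push_cast
    ring
  · intro j hj1 hjn
    rw [ICM_eq p u hw]
    have hS1 : ∑ i ∈ Finset.range (p + 2),
        (if 1 + i < j then v (1 + i) else v (1 + i + 1))
        = (∑ i ∈ Finset.Icc 1 (p + 3), v i) - v j :=
      sum_shift (p + 3) j hj1 hjn v
    have hS2 : ∑ i ∈ Finset.range (p + 2),
        (if 1 + i < j then v (1 + i) else v (1 + i + 1)) ^ 2
        = (∑ i ∈ Finset.Icc 1 (p + 3), v i ^ 2) - v j ^ 2 := by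
      have h : ∀ i ∈ Finset.range (p + 2),
          (if 1 + i < j then v (1 + i) else v (1 + i + 1)) ^ 2 =
            (if 1 + i < j then v (1 + i) ^ 2 else v (1 + i + 1) ^ 2) := by
        intro i _; split_ifs <;> rfl
      rw [Finset.sum_congr rfl h]
      exact sum_shift (p + 3) j hj1 hjn (fun k => v k ^ 2)
    rw [hS1, hS2]
    subst hα hβ
    rw [neg_pow, show p + 3 - 2 = p + 1 by omega, hneg p]
    push_cast
    ring
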